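/- For every nonnegative integer k, in the field of rational functions ℚ(v) with q = v², the identity (1-v)·(-v²;-v)_{2k} / (q^{k+1};q)_{k+1} = ∏_{i=0}^k (1+v^{2i+1})^{-1} holds, where (-v²;-v)_{2k} = ∏_{i=2}^{2k+1}(1+(-v)^i) and (q^{k+1};q)_{k+1} = ∏_{j=0}^{k}(1-q^{k+1+j}). -/
import Mathlib


open Finset

private lemma poly_one_add_ne (n : ℕ) (hn : n ≠ 0) : (1 + Polynomial.X ^ n : Polynomial ℚ) ≠ 0 := by
  intro h
  have := congrArg (fun p => Polynomial.coeff p n) h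
  simp [Polynomial.coeff_one, hn] at this

private lemma poly_one_sub_ne (n : ℕ) (hn : n ≠ 0) : (1 - Polynomial.X ^ n : Polynomial ℚ) ≠ 0 := by
  intro h
  have := congrArg (fun p => Polynomial.coeff p n) h
  simp [Polynomial.coeff_one, hn] at this

private lemma one_add_X_pow_ne (n : ℕ) (hn : n ≠ 0) :
    (1 + (RatFunc.X : RatFunc ℚ) ^ n) ≠ 0 := by
  have h : (1 + (RatFunc.X : RatFunc ℚ) ^ n)
      = algebraMap (Polynomial ℚ) (RatFunc ℚ) (1 + Polynomial.X ^ n) := by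
    simp [map_add, map_pow, RatFunc.algebraMap_X]
  rw [h]
  exact RatFunc.algebraMap_ne_zero (poly_one_add_ne n hn)

private lemma one_sub_X_pow_ne (n : ℕ) (hn : n ≠ 0) :
    (1 - (RatFunc.X : RatFunc ℚ) ^ n) ≠ 0 := by
  have h : (1 - (RatFunc.X : RatFunc ℚ) ^ n)
      = algebraMap (Polynomial ℚ) (RatFunc ℚ) (1 - Polynomial.X ^ n) := by
    simp [map_sub, map_pow, RatFunc.algebraMap_X]
  rw [h]
  exact RatFunc.algebraMap_ne_zero (poly_one_sub_ne n hn)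

private lemma key_prod (k : ℕ) :
    (1 - (RatFunc.X : RatFunc ℚ)) *
      (∏ i ∈ Finset.range (2 * k), (1 + (-(RatFunc.X : RatFunc ℚ)) ^ (i + 2))) *
      (∏ i ∈ Finset.range (k + 1), (1 + (RatFunc.X : RatFunc ℚ) ^ (2 * i + 1))) *
      (∏ j ∈ Finset.range k, (1 - (RatFunc.X : RatFunc ℚ) ^ (2 * (j + 1)))) =
    ∏ j ∈ Finset.range (2 * k + 1), (1 - (RatFunc.X : RatFunc ℚ) ^ (2 * (j + 1))) := by
  set v : RatFunc ℚ := RatFunc.X with hv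
  induction k with
  | zero => simp; ring
  | succ k ih =>
      rw [show 2 * (k + 1) = 2 * k + 1 + 1 from by ring]
      simp only [Finset.prod_range_succ] at ih ⊢
      have he : (-v) ^ (2 * k + 2) = v ^ (2 * k + 2) :=
        Even.neg_pow ⟨k + 1, by ring⟩ _
      have ho : (-v) ^ (2 * k + 1 + 2) = -(v ^ (2 * k + 1 + 2)) :=
        Odd.neg_pow ⟨k + 1, by ring⟩ _
      rw [he, ho]
      linear_combination ((1 + v ^ (2 * k + 2)) * (1 - v ^ (2 * k + 1 + 2)) *
        (1 + v ^ (2 * (k + 1) + 1)) * (1 - v ^ (2 * (k + 1)))) * ih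

theorem unified_factor_identity (k : ℕ) :
    let v : RatFunc ℚ := RatFunc.X
    let q : RatFunc ℚ := v ^ 2
    (1 - v) * (∏ i ∈ Finset.range (2 * k), (1 + (-v) ^ (i + 2))) /
        ∏ j ∈ Finset.range (k + 1), (1 - q ^ (k + 1 + j)) =
      (∏ i ∈ Finset.range (k + 1), (1 + v ^ (2 * i + 1)))⁻¹ := by
  intro v q
  have key := key_prod k
  have hsplit : ∏ j ∈ Finset.range (2 * k + 1), (1 - v ^ (2 * (j + 1)))
      = (∏ j ∈ Finset.range k, (1 - v ^ (2 * (j + 1)))) *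
        ∏ j ∈ Finset.range (k + 1), (1 - v ^ (2 * (k + j + 1))) := by
    rw [show 2 * k + 1 = k + (k + 1) from by ring, Finset.prod_range_add]
  have hD : (∏ j ∈ Finset.range (k + 1), (1 - q ^ (k + 1 + j)))
      = ∏ j ∈ Finset.range (k + 1), (1 - v ^ (2 * (k + j + 1))) := by
    refine Finset.prod_congr rfl fun j _ => ?_
    have : q ^ (k + 1 + j) = v ^ (2 * (k + j + 1)) := by
      simp only [q, ← pow_mul]
      ring_nf
    rw [this]
  have hC : (∏ j ∈ Finset.range k, (1 - v ^ (2 * (j + 1)))) ≠ 0 :=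
    Finset.prod_ne_zero_iff.mpr fun j _ => one_sub_X_pow_ne _ (by omega)
  have hDne : (∏ j ∈ Finset.range (k + 1), (1 - v ^ (2 * (k + j + 1)))) ≠ 0 :=
    Finset.prod_ne_zero_iff.mpr fun j _ => one_sub_X_pow_ne _ (by omega)
  have hP : (∏ i ∈ Finset.range (k + 1), (1 + v ^ (2 * i + 1))) ≠ 0 :=
    Finset.prod_ne_zero_iff.mpr fun i _ => one_add_X_pow_ne _ (by omega)
  rw [hsplit] at key
  have hNP : (1 - v) * (∏ i ∈ Finset.range (2 * k), (1 + (-v) ^ (i + 2))) *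
      (∏ i ∈ Finset.range (k + 1), (1 + v ^ (2 * i + 1)))
      = ∏ j ∈ Finset.range (k + 1), (1 - v ^ (2 * (k + j + 1))) := by
    apply mul_right_cancel₀ hC
    linear_combination key
  rw [hD, div_eq_iff hDne, inv_mul_eq_div, eq_div_iff hP]
  linear_combination hNP
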